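/- For every k ∈ ℕ there exists f_E ∈ ℕ (one may take f_E = k·|Types_k|^h, where h is the height of tp_k(ε) in (Types_k, ⪯)) such that for every n_S ∈ ℕ, every n_E ≥ f_E, and every prefFO^dw sentence φ of quantifier depth k: if the pair (n_S, n_E+1) is winning for System in the token game for φ, then the pair (n_S, n_E) is winning for System in the token game for φ. -/

import Mathlib

set_option maxHeartbeats 1000000

namespace PrefSynth

/-! ### Possibly infinite words -/

/-- A (finite or infinite) word over alphabet `A`: positions carrying `some` letter. -/
abbrev Word (A : Type) : Type := ℕ → Option A

/-- `m` is a position of the word `w`. -/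
def Word.pos {A : Type} (w : Word A) (m : ℕ) : Prop := w m ≠ none

/-- A genuine word: its domain is downward closed. -/
def Word.Closed {A : Type} (w : Word A) : Prop :=
  ∀ i j : ℕ, i ≤ j → w j ≠ none → w i ≠ none

/-- The finite word given by a list. -/
def Word.ofList {A : Type} (l : List A) : Word A := fun i => l[i]?

/-- The infinite word given by a function. -/
def Word.ofFun {A : Type} (u : ℕ → A) : Word A := fun i => some (u i)

/-- The prefix of a word consisting of its first `n` positions; `Word.take w (m+1)`
is `w[0…m]`. -/
def Word.take {A : Type} (w : Word A) (n : ℕ) : Word A :=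
  fun i => if i < n then w i else none

/-- `u` is a prefix of `v`. -/
def Word.IsPrefix {A : Type} (u v : Word A) : Prop :=
  ∀ i, u i ≠ none → v i = u i

/-! ### Prefix first-order logic on words

Formulas in context `n`: the free variables are `Fin n`; when `n ≥ 1`, the variable
`0` is the bounding variable `x̄`, all other variables are prefix variables, and
every quantifier is of the form `∃ x < x̄` (new variables are appended at the end,
i.e. interpreted through `Fin.snoc`). -/

inductive PFm (A : Type) : ℕ → Type where
  | eq {n} : Fin n → Fin n → PFm A n
  | lt {n} : Fin n → Fin n → PFm A n
  | letter {n} : A → Fin n → PFm A n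
  | and {n} : PFm A n → PFm A n → PFm A n
  | not {n} : PFm A n → PFm A n
  | exlt {n} : PFm A (n + 2) → PFm A (n + 1)

/-- Quantifier depth. -/
def PFm.depth {A : Type} : {n : ℕ} → PFm A n → ℕ
  | _, .eq _ _ => 0
  | _, .lt _ _ => 0
  | _, .letter _ _ => 0
  | _, .and φ ψ => max φ.depth ψ.depth
  | _, .not φ => φ.depth
  | _, .exlt φ => φ.depth + 1

/-- Satisfaction of a prefFO formula in a word, under an assignment of the
free variables to positions. -/
def PFm.Sat {A : Type} (w : Word A) : {n : ℕ} → PFm A n → (Fin n → ℕ) → Prop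
  | _, .eq i j, ρ => ρ i = ρ j
  | _, .lt i j, ρ => ρ i < ρ j
  | _, .letter a i, ρ => w (ρ i) = some a
  | _, .and φ ψ, ρ => PFm.Sat w φ ρ ∧ PFm.Sat w ψ ρ
  | _, .not φ, ρ => ¬ PFm.Sat w φ ρ
  | _, .exlt φ, ρ => ∃ m : ℕ, Word.pos w m ∧ m < ρ 0 ∧ PFm.Sat w φ (Fin.snoc ρ m)

/-- prefFO sentences: start by quantifying the bounding variable, and are closed
under boolean combinations. -/
inductive PSen (A : Type) : Type where
  | exB : PFm A 1 → PSen A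
  | and : PSen A → PSen A → PSen A
  | not : PSen A → PSen A

/-- Quantifier depth of a sentence. -/
def PSen.depth {A : Type} : PSen A → ℕ
  | .exB φ => φ.depth + 1
  | .and s t => max s.depth t.depth
  | .not s => s.depth

/-- Satisfaction of a prefFO sentence in a word. -/
def PSen.Sat {A : Type} (w : Word A) : PSen A → Prop
  | .exB φ => ∃ m : ℕ, Word.pos w m ∧ PFm.Sat w φ (fun _ => m)
  | .and s t => PSen.Sat w s ∧ PSen.Sat w t
  | .not s => ¬ PSen.Sat w s

/-- The prefFO `k`-type of a word: the set of prefFO sentences of quantifier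
depth at most `k` it satisfies. -/
def tp {A : Type} (k : ℕ) (w : Word A) : Set (PSen A) :=
  {s | PSen.depth s ≤ k ∧ PSen.Sat w s}

/-- `Types_k`: the set of prefFO `k`-types of finite words over `A`. -/
def WTypes (A : Type) (k : ℕ) : Set (Set (PSen A)) :=
  {T | ∃ l : List A, T = tp k (Word.ofList l)}

/-- The relation `⪯` on types: `τ ⪯ τ'` iff some finite word of type `τ` has an
extension of type `τ'`. -/
def typeLe {A : Type} (k : ℕ) (τ τ' : Set (PSen A)) : Prop :=
  ∃ u v : List A, tp k (Word.ofList u) = τ ∧ tp k (Word.ofList (u ++ v)) = τ'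

/-- Two words agree on all prefFO sentences of quantifier depth at most `k`. -/
def prefEquiv {A : Type} (k : ℕ) (w w' : Word A) : Prop :=
  ∀ s : PSen A, PSen.depth s ≤ k → (PSen.Sat w s ↔ PSen.Sat w' s)

/-! ### Full first-order logic on words -/

inductive FOFm (A : Type) : ℕ → Type where
  | eq {n} : Fin n → Fin n → FOFm A n
  | lt {n} : Fin n → Fin n → FOFm A n
  | letter {n} : A → Fin n → FOFm A n
  | and {n} : FOFm A n → FOFm A n → FOFm A n
  | not {n} : FOFm A n → FOFm A n
  | ex {n} : FOFm A (n + 1) → FOFm A n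

def FOFm.depth {A : Type} : {n : ℕ} → FOFm A n → ℕ
  | _, .eq _ _ => 0
  | _, .lt _ _ => 0
  | _, .letter _ _ => 0
  | _, .and φ ψ => max φ.depth ψ.depth
  | _, .not φ => φ.depth
  | _, .ex φ => φ.depth + 1

def FOFm.Sat {A : Type} (w : Word A) : {n : ℕ} → FOFm A n → (Fin n → ℕ) → Prop
  | _, .eq i j, ρ => ρ i = ρ j
  | _, .lt i j, ρ => ρ i < ρ j
  | _, .letter a i, ρ => w (ρ i) = some a
  | _, .and φ ψ, ρ => FOFm.Sat w φ ρ ∧ FOFm.Sat w ψ ρ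
  | _, .not φ, ρ => ¬ FOFm.Sat w φ ρ
  | _, .ex φ, ρ => ∃ m : ℕ, Word.pos w m ∧ FOFm.Sat w φ (Fin.snoc ρ m)

/-- Two words agree on all FO sentences of quantifier depth at most `k`. -/
def foEquiv {A : Type} (k : ℕ) (w w' : Word A) : Prop :=
  ∀ s : FOFm A 0, FOFm.depth s ≤ k →
    (FOFm.Sat w s Fin.elim0 ↔ FOFm.Sat w' s Fin.elim0)

/-! ### The prefix Ehrenfeucht–Fraïssé game on words

After the first (bounding) round, pebbles are kept as matched pairs of
positions: `(m, m')` with `m` in the first word and `m'` in the second. -/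

/-- The agreement condition: the correspondence between pebbled positions
preserves equality, the order `<` and the letters. -/
def AgreeW {A : Type} (u v : Word A) (L : List (ℕ × ℕ)) : Prop :=
  ∀ p ∈ L, ∀ q ∈ L,
    ((p.1 = q.1) ↔ (p.2 = q.2)) ∧ ((p.1 < q.1) ↔ (p.2 < q.2)) ∧
    (∀ a : A, u p.1 = some a ↔ v p.2 = some a)

/-- `DupWinW u v b b' r L`: with bounding pebbles placed on `b` (in `u`) and `b'`
(in `v`), and prefix pebbles `L` already placed, Duplicator wins the game with `r`
remaining rounds. -/
def DupWinW {A : Type} (u v : Word A) (b b' : ℕ) : ℕ → List (ℕ × ℕ) → Prop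
  | 0, L => AgreeW u v ((b, b') :: L)
  | r + 1, L => AgreeW u v ((b, b') :: L) ∧
      (∀ m, Word.pos u m → m < b →
        ∃ m', Word.pos v m' ∧ m' < b' ∧ DupWinW u v b b' r ((m, m') :: L)) ∧
      (∀ m', Word.pos v m' → m' < b' →
        ∃ m, Word.pos u m ∧ m < b ∧ DupWinW u v b b' r ((m, m') :: L))

/-! ### Data words -/

/-- A move of a data word: a System action together with a System process, or an
Environment action together with an Environment process. `A`, `B` are the System
and Environment alphabets; `P`, `Q` the System and Environment process sets. -/
abbrev DMove (A B P Q : Type) : Type := (A × P) ⊕ (B × Q)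

/-- The process of a move. -/
def dproc {A B P Q : Type} : DMove A B P Q → P ⊕ Q :=
  Sum.elim (fun ap => Sum.inl ap.2) (fun bq => Sum.inr bq.2)

/-- The action of a move. -/
def dact {A B P Q : Type} : DMove A B P Q → A ⊕ B :=
  Sum.elim (fun ap => Sum.inl ap.1) (fun bq => Sum.inr bq.1)

/-- The process acting at position `m` of a data word. -/
def procAt {A B P Q : Type} (d : Word (DMove A B P Q)) (m : ℕ) : Option (P ⊕ Q) :=
  (d m).map dproc

/-- The action taken at position `m` of a data word. -/
def actAt {A B P Q : Type} (d : Word (DMove A B P Q)) (m : ℕ) : Option (A ⊕ B) :=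
  (d m).map dact

/-- Elements of the structure associated with a data word: one process element
for every process, and one element for every position. -/
abbrev Elem (P Q : Type) : Type := (P ⊕ Q) ⊕ ℕ

/-- The `∼`-class (i.e. the process) of an element of a data word. -/
def classOfE {A B P Q : Type} (d : Word (DMove A B P Q)) : Elem P Q → Option (P ⊕ Q)
  | .inl q => some q
  | .inr m => procAt d m

/-! ### Prefix first-order logic on data words

`PDW A B p b x` : formulas in a context with `p` process variables, `b` bounding
variables and `x` prefix variables.  Sentences (possibly with constants, constants
being modelled as the initial free variables) are obtained by instantiating the
contexts. -/

/-- A variable of any of the three kinds. -/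
abbrev DVar (p b x : ℕ) : Type := Fin p ⊕ (Fin b ⊕ Fin x)

inductive PDW (A B : Type) : ℕ → ℕ → ℕ → Type where
  | eq {p b x} : DVar p b x → DVar p b x → PDW A B p b x
  | procS {p b x} : Fin p → PDW A B p b x
  | procE {p b x} : Fin p → PDW A B p b x
  | letter {p b x} : (A ⊕ B) → (Fin b ⊕ Fin x) → PDW A B p b x
  | lesim {p b x} : Fin x → Fin x → PDW A B p b x
  | sim {p b x} : Fin p → DVar p b x → PDW A B p b x
  | and {p b x} : PDW A B p b x → PDW A B p b x → PDW A B p b x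
  | not {p b x} : PDW A B p b x → PDW A B p b x
  | exP {p b x} : PDW A B (p + 1) b x → PDW A B p b x
  | exB {p b x} : PDW A B p (b + 1) x → PDW A B p b x
  | exX {p b x} : Fin b → PDW A B p b (x + 1) → PDW A B p b x

/-- Quantifier depth. -/
def PDW.depth {A B : Type} : {p b x : ℕ} → PDW A B p b x → ℕ
  | _, _, _, .eq _ _ => 0
  | _, _, _, .procS _ => 0
  | _, _, _, .procE _ => 0
  | _, _, _, .letter _ _ => 0
  | _, _, _, .lesim _ _ => 0
  | _, _, _, .sim _ _ => 0
  | _, _, _, .and φ ψ => max φ.depth ψ.depth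
  | _, _, _, .not φ => φ.depth
  | _, _, _, .exP φ => φ.depth + 1
  | _, _, _, .exB φ => φ.depth + 1
  | _, _, _, .exX _ φ => φ.depth + 1

/-- Interpretation of a variable as an element of the data-word structure. -/
def interpDVar {P Q : Type} {p b x : ℕ} (ρP : Fin p → P ⊕ Q) (ρB : Fin b → ℕ)
    (ρX : Fin x → ℕ) : DVar p b x → Elem P Q
  | .inl i => Sum.inl (ρP i)
  | .inr (.inl i) => Sum.inr (ρB i)
  | .inr (.inr i) => Sum.inr (ρX i)

/-- Satisfaction of a prefFO^dw formula in a data word, under assignments of the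
process, bounding and prefix variables.  New bounding variables must be positions
lying in a fresh class (w.r.t. all present bounding variables), new prefix
variables must be `≲` their associated bounding variable. -/
def PDW.Sat {A B P Q : Type} (d : Word (DMove A B P Q)) :
    {p b x : ℕ} → PDW A B p b x → (Fin p → P ⊕ Q) → (Fin b → ℕ) → (Fin x → ℕ) → Prop
  | _, _, _, .eq v w, ρP, ρB, ρX => interpDVar ρP ρB ρX v = interpDVar ρP ρB ρX w
  | _, _, _, .procS i, ρP, _, _ => ∃ q : P, ρP i = Sum.inl q
  | _, _, _, .procE i, ρP, _, _ => ∃ q : Q, ρP i = Sum.inr q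
  | _, _, _, .letter a v, _, ρB, ρX => actAt d (Sum.elim ρB ρX v) = some a
  | _, _, _, .lesim i j, _, _, ρX =>
      ρX i < ρX j ∧ ∃ q, procAt d (ρX i) = some q ∧ procAt d (ρX j) = some q
  | _, _, _, .sim i v, ρP, ρB, ρX => classOfE d (interpDVar ρP ρB ρX v) = some (ρP i)
  | _, _, _, .and φ ψ, ρP, ρB, ρX => PDW.Sat d φ ρP ρB ρX ∧ PDW.Sat d ψ ρP ρB ρX
  | _, _, _, .not φ, ρP, ρB, ρX => ¬ PDW.Sat d φ ρP ρB ρX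
  | _, _, _, .exP φ, ρP, ρB, ρX => ∃ q : P ⊕ Q, PDW.Sat d φ (Fin.snoc ρP q) ρB ρX
  | _, _, _, .exB φ, ρP, ρB, ρX => ∃ m : ℕ, d m ≠ none ∧
      (∀ j, procAt d m ≠ procAt d (ρB j)) ∧ PDW.Sat d φ ρP (Fin.snoc ρB m) ρX
  | _, _, _, .exX y φ, ρP, ρB, ρX => ∃ m : ℕ, d m ≠ none ∧ m < ρB y ∧
      procAt d m = procAt d (ρB y) ∧ PDW.Sat d φ ρP ρB (Fin.snoc ρX m)

/-- Satisfaction of a prefFO^dw sentence (no constants) in a data word. -/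
def SatS {A B P Q : Type} (d : Word (DMove A B P Q)) (φ : PDW A B 0 0 0) : Prop :=
  PDW.Sat d φ Fin.elim0 Fin.elim0 Fin.elim0

/-! ### Classes of a data word -/

/-- `m` is a position of process `q` in the data word `d`. -/
def isPosOf {A B P Q : Type} (d : Word (DMove A B P Q)) (q : P ⊕ Q) (m : ℕ) : Prop :=
  procAt d m = some q

open Classical in
/-- The class of process `q` in the data word `d`, as a (finite or infinite) word
over `A ⊕ B`: its `i`-th letter is the action taken at the `i`-th position of `q`. -/
noncomputable def classWord {A B P Q : Type} (d : Word (DMove A B P Q)) (q : P ⊕ Q) :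
    Word (A ⊕ B) :=
  fun i =>
    if {m | isPosOf d q m}.Infinite ∨ i < Set.ncard {m | isPosOf d q m}
    then actAt d (Nat.nth (isPosOf d q) i) else none

/-- The set of processes of `d` whose class has prefFO `k`-type `τ`. -/
def classesOfType {A B P Q : Type} (d : Word (DMove A B P Q)) (k : ℕ)
    (τ : Set (PSen (A ⊕ B))) : Set (P ⊕ Q) :=
  {q | tp k (classWord d q) = τ}

end PrefSynth
/-! ### The prefix Ehrenfeucht–Fraïssé game on data words (with constants) -/

namespace PrefSynth

/-- A pebble placed on a data word: a process pebble, a bounding pebble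
or a prefix pebble. -/
inductive Peb (P Q : Type) : Type where
  | proc : P ⊕ Q → Peb P Q
  | bound : ℕ → Peb P Q
  | pref : ℕ → Peb P Q

/-- The element on which a pebble is placed. -/
def Peb.elem {P Q : Type} : Peb P Q → Elem P Q
  | .proc q => Sum.inl q
  | .bound m => Sum.inr m
  | .pref m => Sum.inr m

/-- `e` is a System process element. -/
def IsProcSE {P Q : Type} (e : Elem P Q) : Prop := ∃ q : P, e = Sum.inl (Sum.inl q)

/-- `e` is an Environment process element. -/
def IsProcEE {P Q : Type} (e : Elem P Q) : Prop := ∃ q : Q, e = Sum.inl (Sum.inr q)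

/-- `e` is a position labelled by the letter `a`. -/
def LetterIsE {A B P Q : Type} (d : Word (DMove A B P Q)) (e : Elem P Q) (a : A ⊕ B) :
    Prop := ∃ m : ℕ, e = Sum.inr m ∧ actAt d m = some a

/-- `e ∼ f` in the data word `d`. -/
def SimE {A B P Q : Type} (d : Word (DMove A B P Q)) (e f : Elem P Q) : Prop :=
  ∃ q, classOfE d e = some q ∧ classOfE d f = some q

/-- `e ≲ f` in the data word `d`. -/
def LesimE {A B P Q : Type} (d : Word (DMove A B P Q)) (e f : Elem P Q) : Prop :=
  ∃ m m' : ℕ, e = Sum.inr m ∧ f = Sum.inr m' ∧ m < m' ∧ SimE d e f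

/-- Agreement of a correspondence between elements of two data words: it must
preserve equality, `Proc_S`, `Proc_E`, the letters, `≲` and `∼`. -/
def AgreeDW {A B P Q P' Q' : Type} (d : Word (DMove A B P Q))
    (d' : Word (DMove A B P' Q')) (E : List (Elem P Q × Elem P' Q')) : Prop :=
  ∀ e ∈ E, ∀ f ∈ E,
    ((e.1 = f.1) ↔ (e.2 = f.2)) ∧
    (IsProcSE e.1 ↔ IsProcSE e.2) ∧
    (IsProcEE e.1 ↔ IsProcEE e.2) ∧
    (∀ a : A ⊕ B, LetterIsE d e.1 a ↔ LetterIsE d' e.2 a) ∧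
    (LesimE d e.1 f.1 ↔ LesimE d' e.2 f.2) ∧
    (SimE d e.1 f.1 ↔ SimE d' e.2 f.2)

/-- A legal bounding move: a position whose class contains no previously placed
bounding pebble (from `l`) and no bounding constant (from `B0`). -/
def LegalBound {A B P Q : Type} (d : Word (DMove A B P Q)) (B0 : List ℕ)
    (l : List (Peb P Q)) (m : ℕ) : Prop :=
  d m ≠ none ∧ (∀ m₀ : ℕ, Peb.bound m₀ ∈ l → procAt d m ≠ procAt d m₀) ∧
    (∀ m₀ ∈ B0, procAt d m ≠ procAt d m₀)

/-- A legal prefix move: a position such that some previously placed bounding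
pebble or bounding constant lies in the same class, at a later position. -/
def LegalPref {A B P Q : Type} (d : Word (DMove A B P Q)) (B0 : List ℕ)
    (l : List (Peb P Q)) (m : ℕ) : Prop :=
  d m ≠ none ∧
    ∃ m₀ : ℕ, (Peb.bound m₀ ∈ l ∨ m₀ ∈ B0) ∧ m < m₀ ∧ procAt d m = procAt d m₀

/-- The matched pairs of elements determined by the constants `E0` and the
pebbles `L`. -/
def pairElems {P Q P' Q' : Type} (E0 : List (Elem P Q × Elem P' Q'))
    (L : List (Peb P Q × Peb P' Q')) : List (Elem P Q × Elem P' Q') :=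
  E0 ++ L.map (fun pq => (pq.1.elem, pq.2.elem))

/-- `DupWinDW d d' E0 B0 B0' r L`: Duplicator wins the `r`-round prefix EF game on
the data words `d` and `d'` with matched constant elements `E0` (the bounding
constants being interpreted by `B0` in `d` and by `B0'` in `d'`) and already
placed matched pebbles `L`. -/
def DupWinDW {A B P Q P' Q' : Type} (d : Word (DMove A B P Q))
    (d' : Word (DMove A B P' Q')) (E0 : List (Elem P Q × Elem P' Q'))
    (B0 B0' : List ℕ) : ℕ → List (Peb P Q × Peb P' Q') → Prop
  | 0, L => AgreeDW d d' (pairElems E0 L)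
  | r + 1, L => AgreeDW d d' (pairElems E0 L) ∧
      (∀ q : P ⊕ Q, ∃ q' : P' ⊕ Q',
        DupWinDW d d' E0 B0 B0' r ((Peb.proc q, Peb.proc q') :: L)) ∧
      (∀ q' : P' ⊕ Q', ∃ q : P ⊕ Q,
        DupWinDW d d' E0 B0 B0' r ((Peb.proc q, Peb.proc q') :: L)) ∧
      (∀ m : ℕ, LegalBound d B0 (L.map Prod.fst) m →
        ∃ m' : ℕ, LegalBound d' B0' (L.map Prod.snd) m' ∧
          DupWinDW d d' E0 B0 B0' r ((Peb.bound m, Peb.bound m') :: L)) ∧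
      (∀ m' : ℕ, LegalBound d' B0' (L.map Prod.snd) m' →
        ∃ m : ℕ, LegalBound d B0 (L.map Prod.fst) m ∧
          DupWinDW d d' E0 B0 B0' r ((Peb.bound m, Peb.bound m') :: L)) ∧
      (∀ m : ℕ, LegalPref d B0 (L.map Prod.fst) m →
        ∃ m' : ℕ, LegalPref d' B0' (L.map Prod.snd) m' ∧
          DupWinDW d d' E0 B0 B0' r ((Peb.pref m, Peb.pref m') :: L)) ∧
      (∀ m' : ℕ, LegalPref d' B0' (L.map Prod.snd) m' →
        ∃ m : ℕ, LegalPref d B0 (L.map Prod.fst) m ∧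
          DupWinDW d d' E0 B0 B0' r ((Peb.pref m, Peb.pref m') :: L))

/-- The constants of a data word: interpretations of `cp` process constants,
`cb` bounding constants and `cx` prefix constants.  Validity: bounding and
prefix constants are positions, no two bounding constants share a class, and
each prefix constant is `≲` some bounding constant. -/
def ValidConsts {A B P Q : Type} {cp cb cx : ℕ} (d : Word (DMove A B P Q))
    (γP : Fin cp → P ⊕ Q) (γB : Fin cb → ℕ) (γX : Fin cx → ℕ) : Prop :=
  (∀ j, d (γB j) ≠ none) ∧ (∀ j, d (γX j) ≠ none) ∧
  (∀ i j, i ≠ j → procAt d (γB i) ≠ procAt d (γB j)) ∧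
  (∀ i, ∃ j, γX i < γB j ∧ procAt d (γX i) = procAt d (γB j))

/-- The matched constant elements determined by two interpretations of the same
constant symbols. -/
def constPairs {P Q P' Q' : Type} {cp cb cx : ℕ}
    (γP : Fin cp → P ⊕ Q) (γB : Fin cb → ℕ) (γX : Fin cx → ℕ)
    (γP' : Fin cp → P' ⊕ Q') (γB' : Fin cb → ℕ) (γX' : Fin cx → ℕ) :
    List (Elem P Q × Elem P' Q') :=
  (List.ofFn fun i : Fin cp =>
    ((Sum.inl (γP i) : Elem P Q), (Sum.inl (γP' i) : Elem P' Q'))) ++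
  (List.ofFn fun i : Fin cb =>
    ((Sum.inr (γB i) : Elem P Q), (Sum.inr (γB' i) : Elem P' Q'))) ++
  (List.ofFn fun i : Fin cx =>
    ((Sum.inr (γX i) : Elem P Q), (Sum.inr (γX' i) : Elem P' Q')))

/-! ### The standard synthesis game -/

/-- A System strategy in the standard synthesis game: given the finite data word
played so far, output a System action and process, or pass (`none` plays the
role of `ε`). -/
abbrev Strat (A B P Q : Type) : Type := List (DMove A B P Q) → Option (A × P)

/-- The list of the first `n` moves of a data word. -/
def histList {M : Type} (d : Word M) (n : ℕ) : List M := (List.range n).filterMap d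

/-- The data word `d` is compatible with the System strategy `σ`. -/
def CompatibleStd {A B P Q : Type} (σ : Strat A B P Q) (d : Word (DMove A B P Q)) :
    Prop :=
  ∀ i a p, d i = some (Sum.inl (a, p)) → σ (histList d i) = some (a, p)

/-- The data word `d` is fair with respect to `σ`: either it is finite and `σ`
passes after it, or (being infinite) if `σ` wants to play infinitely often then
System actions occur infinitely often. -/
def FairStd {A B P Q : Type} (σ : Strat A B P Q) (d : Word (DMove A B P Q)) : Prop :=
  (∃ n, d n = none ∧ (∀ i, i < n → d i ≠ none) ∧ σ (histList d n) = none) ∨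
  ((∀ n, d n ≠ none) ∧
    ((∀ N, ∃ i, N ≤ i ∧ σ (histList d (i + 1)) ≠ none) →
     (∀ N, ∃ i, N ≤ i ∧ ∃ a p, d i = some (Sum.inl (a, p)))))

/-- `σ` is winning for `φ` in the standard synthesis game: every compatible and
fair data word satisfies `φ`. -/
def WinningStd {A B P Q : Type} (φ : PDW A B 0 0 0) (σ : Strat A B P Q) : Prop :=
  ∀ d : Word (DMove A B P Q), Word.Closed d → CompatibleStd σ d → FairStd σ d →
    SatS d φ

/-- System has an `(nS, nE)`-winning strategy for `φ` in the standard synthesis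
game: a winning strategy whenever `|P_S| = nS` and `|P_E| = nE`. -/
def SystemWinsStd (A B : Type) (φ : PDW A B 0 0 0) (nS nE : ℕ) : Prop :=
  ∀ (P Q : Type), Finite P → Finite Q → Nat.card P = nS → Nat.card Q = nE →
    ∃ σ : Strat A B P Q, WinningStd φ σ

/-! ### The symmetric game -/

/-- A System strategy in the symmetric game: may answer by any finite sequence
of System moves (`[]` playing the role of `ε`). -/
abbrev SymStrat (A B P Q : Type) : Type := List (DMove A B P Q) → List (A × P)

/-- The history after `n` rounds of the symmetric game, the Environment playing
the finite blocks `env 0, env 1, …` and System answering according to `σ`,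
with strict alternation, Environment first. -/
def symHist {A B P Q : Type} (σ : SymStrat A B P Q) (env : ℕ → List (B × Q)) :
    ℕ → List (DMove A B P Q)
  | 0 => []
  | n + 1 =>
      let h := symHist σ env n ++ (env n).map Sum.inr
      h ++ (σ h).map Sum.inl

/-- The data word `d` is compatible with the symmetric strategy `σ`: it is the
limit of the histories of an alternating play in which System follows `σ`. -/
def CompatibleSym {A B P Q : Type} (σ : SymStrat A B P Q)
    (d : Word (DMove A B P Q)) : Prop :=
  ∃ env : ℕ → List (B × Q),
    (∀ n i x, (symHist σ env n)[i]? = some x → d i = some x) ∧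
    (∀ i, d i ≠ none → ∃ n, i < (symHist σ env n).length)

/-- Fairness in the symmetric game: if `d` is finite then `σ` passes after it. -/
def FairSym {A B P Q : Type} (σ : SymStrat A B P Q) (d : Word (DMove A B P Q)) :
    Prop :=
  ∀ n, d n = none → (∀ i, i < n → d i ≠ none) → σ (histList d n) = []

/-- `σ` is winning for `φ` in the symmetric game. -/
def WinningSym {A B P Q : Type} (φ : PDW A B 0 0 0) (σ : SymStrat A B P Q) : Prop :=
  ∀ d : Word (DMove A B P Q), Word.Closed d → CompatibleSym σ d → FairSym σ d →
    SatS d φ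

/-- System has an `(nS, nE)`-winning strategy for `φ` in the symmetric game. -/
def SystemWinsSym (A B : Type) (φ : PDW A B 0 0 0) (nS nE : ℕ) : Prop :=
  ∀ (P Q : Type), Finite P → Finite Q → Nat.card P = nS → Nat.card Q = nE →
    ∃ σ : SymStrat A B P Q, WinningSym φ σ

/-! ### The token game on types -/

/-- A node of the arena: a prefFO `k`-type of finite words. -/
abbrev Typ (A : Type) (k : ℕ) : Type := {T : Set (PSen A) // T ∈ WTypes A k}

/-- The initial node: the type of the empty word. -/
def initTyp (A : Type) (k : ℕ) : Typ A k :=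
  ⟨tp k (Word.ofList ([] : List A)), ⟨[], rfl⟩⟩

/-- The transition relation of the arena. -/
def typLe {A : Type} {k : ℕ} (τ τ' : Typ A k) : Prop := typeLe k τ.1 τ'.1

/-- A configuration: the position of each token in the arena.  `TS` and `TE` are
the sets of System and Environment tokens. -/
abbrev Conf (A : Type) (k : ℕ) (TS TE : Type) : Type := (TS ⊕ TE) → Typ A k

/-- A System strategy in the token game: given the sequence of configurations
so far, where to move each System token. -/
abbrev TokStrat (A : Type) (k : ℕ) (TS TE : Type) : Type :=
  List (Conf A k TS TE) → TS → Typ A k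

/-- A play of the token game: all tokens start on the initial node, tokens only
move along `⪯`, and the players strictly alternate, Environment first (at even
stages Environment moves, so System tokens stay put; at odd stages System moves). -/
def IsPlay {A : Type} {k : ℕ} {TS TE : Type} (conf : ℕ → Conf A k TS TE) : Prop :=
  (∀ t, conf 0 t = initTyp A k) ∧
  (∀ n t, typLe (conf n t) (conf (n + 1) t)) ∧
  (∀ n, Even n → ∀ t : TS, conf (n + 1) (Sum.inl t) = conf n (Sum.inl t)) ∧
  (∀ n, ¬ Even n → ∀ t : TE, conf (n + 1) (Sum.inr t) = conf n (Sum.inr t))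

/-- The play `conf` is compatible with the System strategy `σ`. -/
def CompatibleTok {A : Type} {k : ℕ} {TS TE : Type} (σ : TokStrat A k TS TE)
    (conf : ℕ → Conf A k TS TE) : Prop :=
  ∀ n, ¬ Even n → ∀ t : TS,
    conf (n + 1) (Sum.inl t) = σ (List.ofFn (fun i : Fin (n + 1) => conf i)) t

/-- The strategy `σ` only suggests legal moves (along `⪯`). -/
def StratLegal {A : Type} {k : ℕ} {TS TE : Type} (σ : TokStrat A k TS TE) : Prop :=
  ∀ (h : List (Conf A k TS TE)) (hne : h ≠ []) (t : TS),
    typLe (h.getLast hne (Sum.inl t)) (σ h t)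

/-- A configuration matches a `k`-counting function `c` (values `≥ k`
representing `k+`): the number of tokens on each type `τ` is exactly `c τ` when
`c τ < k`, and at least `k` otherwise. -/
def CfgMatches {A : Type} {k : ℕ} {TS TE : Type} (c : Typ A k → ℕ)
    (cfg : Conf A k TS TE) : Prop :=
  ∀ τ : Typ A k,
    (c τ < k → Nat.card {t : TS ⊕ TE // cfg t = τ} = c τ) ∧
    (¬ c τ < k → k ≤ Nat.card {t : TS ⊕ TE // cfg t = τ})

/-- The acceptance set `Acc_φ`: the `k`-counting functions `c` such that every
data word whose numbers of classes of each prefFO `k`-type match `c` satisfies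
`φ`. -/
def AccC (A B : Type) (k : ℕ) (φ : PDW A B 0 0 0) (c : Typ (A ⊕ B) k → ℕ) : Prop :=
  (∀ τ, c τ ≤ k) ∧
  ∀ (P Q : Type) (d : Word (DMove A B P Q)), Word.Closed d →
    (∀ τ : Typ (A ⊕ B) k,
      (c τ < k → Cardinal.mk ↥(classesOfType d k τ.1) = (c τ : Cardinal)) ∧
      (¬ c τ < k → (k : Cardinal) ≤ Cardinal.mk ↥(classesOfType d k τ.1))) →
    SatS d φ

/-- The strategy `σ` is winning in the token game for `φ`: every compatible
maximal play stabilizes in a limit configuration satisfying the acceptance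
condition. -/
def TokWinning {A B : Type} {k : ℕ} {TS TE : Type} (φ : PDW A B 0 0 0)
    (σ : TokStrat (A ⊕ B) k TS TE) : Prop :=
  ∀ conf : ℕ → Conf (A ⊕ B) k TS TE, IsPlay conf → CompatibleTok σ conf →
    ∃ N, (∀ n, N ≤ n → conf n = conf N) ∧
      ∃ c : Typ (A ⊕ B) k → ℕ, AccC A B k φ c ∧ CfgMatches c (conf N)

/-- The pair `(nS, nE)` is winning for System in the token game for `φ` (of
depth `k`). -/
def SystemWinsTok (A B : Type) (k : ℕ) (φ : PDW A B 0 0 0) (nS nE : ℕ) : Prop :=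
  ∀ (TS TE : Type), Finite TS → Finite TE → Nat.card TS = nS → Nat.card TE = nE →
    ∃ σ : TokStrat (A ⊕ B) k TS TE, StratLegal σ ∧ TokWinning φ σ

/-! ### An explicit encoding of prefFO^dw sentences, for decidability -/

/-- Encoding of a variable. -/
def encodeDVar {p b x : ℕ} : DVar p b x → ℕ
  | .inl i => Nat.pair 0 i.1
  | .inr (.inl i) => Nat.pair 1 i.1
  | .inr (.inr i) => Nat.pair 2 i.1

/-- An explicit injective encoding of prefFO^dw formulas over the alphabets
`Fin m` and `Fin n` into the natural numbers. -/
def encodePDW {m n : ℕ} : {p b x : ℕ} → PDW (Fin m) (Fin n) p b x → ℕ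
  | _, _, _, .eq v w => Nat.pair 0 (Nat.pair (encodeDVar v) (encodeDVar w))
  | _, _, _, .procS i => Nat.pair 1 i.1
  | _, _, _, .procE i => Nat.pair 2 i.1
  | _, _, _, .letter a v =>
      Nat.pair 3 (Nat.pair
        (Sum.elim (fun i => Nat.pair 0 i.1) (fun j => Nat.pair 1 j.1) a)
        (Sum.elim (fun i => Nat.pair 0 i.1) (fun j => Nat.pair 1 j.1) v))
  | _, _, _, .lesim i j => Nat.pair 4 (Nat.pair i.1 j.1)
  | _, _, _, .sim i v => Nat.pair 5 (Nat.pair i.1 (encodeDVar v))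
  | _, _, _, .and φ ψ => Nat.pair 6 (Nat.pair (encodePDW φ) (encodePDW ψ))
  | _, _, _, .not φ => Nat.pair 7 (encodePDW φ)
  | _, _, _, .exP φ => Nat.pair 8 (encodePDW φ)
  | _, _, _, .exB φ => Nat.pair 9 (encodePDW φ)
  | _, _, _, .exX y φ => Nat.pair 10 (Nat.pair y.1 (encodePDW φ))

end PrefSynth
namespace PrefSynth

/-! ### Part 0: condensation of lists, basic facts about `typLe` -/

theorem typLe_refl {A : Type} {k : ℕ} (τ : Typ A k) : typLe τ τ := by
  obtain ⟨T, l, hl⟩ := τ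
  exact ⟨l, [], hl.symm, by simpa using hl.symm⟩

theorem typLe_init {A : Type} {k : ℕ} (τ : Typ A k) : typLe (initTyp A k) τ := by
  obtain ⟨T, l, hl⟩ := τ
  exact ⟨[], l, rfl, by simpa using hl.symm⟩

open Classical in
noncomputable def cstep {α : Type} (l : List α) (x : α) : List α :=
  if l.getLast? = some x then l else l ++ [x]

noncomputable def condense {α : Type} (l : List α) : List α := l.foldl cstep []

@[simp] theorem condense_nil {α : Type} : condense ([] : List α) = [] := rfl

theorem condense_concat {α : Type} (l : List α) (x : α) :
    condense (l ++ [x]) = cstep (condense l) x := List.foldl_concat _ _ _ _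

theorem getLast?_cstep {α : Type} (l : List α) (x : α) : (cstep l x).getLast? = some x := by
  unfold cstep
  split
  · next h => exact h
  · exact List.getLast?_concat

theorem cstep_ne_nil {α : Type} (l : List α) (x : α) : cstep l x ≠ [] := by
  intro h
  have := getLast?_cstep l x
  rw [h] at this
  simp at this

theorem condense_getLast? {α : Type} (l : List α) : (condense l).getLast? = l.getLast? := by
  induction l using List.reverseRecOn with
  | nil => rfl
  | append_singleton l x _ =>
      rw [condense_concat, getLast?_cstep, List.getLast?_concat]

theorem condense_prefix_concat {α : Type} (l : List α) (x : α) :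
    condense l <+: condense (l ++ [x]) := by
  rw [condense_concat]
  unfold cstep
  split
  · exact List.prefix_refl _
  · exact ⟨[x], rfl⟩

@[simp] theorem condense_singleton {α : Type} (x : α) : condense [x] = [x] := by
  have : [x] = ([] : List α) ++ [x] := rfl
  rw [this, condense_concat]
  unfold cstep
  simp

theorem condense_concat_self {α : Type} (l : List α) (x : α) (h : l.getLast? = some x) :
    condense (l ++ [x]) = condense l := by
  rw [condense_concat]
  unfold cstep
  rw [if_pos]
  rw [condense_getLast?, h]

theorem condense_chain'_ne {α : Type} (l : List α) :
    List.IsChain (· ≠ ·) (condense l) := by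
  induction l using List.reverseRecOn with
  | nil => simp
  | append_singleton l x ih =>
      rw [condense_concat]
      unfold cstep
      split
      · exact ih
      · next h =>
        rw [List.isChain_append]
        refine ⟨ih, List.isChain_singleton _, ?_⟩
        intro a ha y hy
        simp only [List.head?_cons, Option.mem_def, Option.some.injEq] at hy
        subst hy
        intro hax
        exact h (by rw [ha, hax])

theorem condense_chain' {α : Type} {R : α → α → Prop} {l : List α}
    (hl : List.IsChain R l) : List.IsChain R (condense l) := by
  induction l using List.reverseRecOn with
  | nil => simp
  | append_singleton l x ih =>
      rw [List.isChain_append] at hl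
      obtain ⟨h1, _, h3⟩ := hl
      rw [condense_concat]
      unfold cstep
      split
      · exact ih h1
      · rw [List.isChain_append]
        refine ⟨ih h1, List.isChain_singleton _, ?_⟩
        intro a ha y hy
        simp only [List.head?_cons, Option.mem_def, Option.some.injEq] at hy
        subst hy
        rw [condense_getLast?] at ha
        exact h3 a ha x rfl

/-- Extending a prefix by one element. -/
theorem prefix_cases {α : Type} {p c : List α} (h : p <+: c) :
    c = p ∨ ∃ x, p ++ [x] <+: c := by
  obtain ⟨s, rfl⟩ := h
  cases s with
  | nil => left; simp
  | cons y s' => right; exact ⟨y, s', by simp⟩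

end PrefSynth
namespace PrefSynth

/-! ### Part I: finiteness of the set of prefFO k-types -/

instance : Finite Prop :=
  Finite.of_surjective (fun b : Bool => (b = true : Prop)) (by
    intro p
    by_cases hp : p
    · exact ⟨true, by simp [hp]⟩
    · exact ⟨false, by simp [hp]⟩)

instance optionFinite (A : Type) [Finite A] : Finite (Option A) := by
  haveI := Fintype.ofFinite A
  exact Finite.of_fintype _

abbrev Ch0 (A : Type) (n : ℕ) : Type :=
  (Fin (n+1) → Fin (n+1) → Prop) × (Fin (n+1) → Fin (n+1) → Prop) × (Fin (n+1) → Option A)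

instance ch0Finite (A : Type) [Finite A] (n : ℕ) : Finite (Ch0 A n) := by
  unfold Ch0; infer_instance

/-- Characteristic values for prefFO formulas. -/
def Ch (A : Type) (k : ℕ) : ℕ → Type :=
  Nat.rec (motive := fun _ => ℕ → Type) (Ch0 A) (fun _ ih n => Ch0 A n × Set (ih (n+1))) k

instance chFinite (A : Type) [Finite A] : ∀ (k n : ℕ), Finite (Ch A k n)
  | 0, n => ch0Finite A n
  | (k+1), n => by
      have := chFinite A k (n+1)
      exact inferInstanceAs (Finite (Ch0 A n × Set (Ch A k (n+1))))

/-- The depth-0 characteristic of a word with an assignment. -/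
def chi0 (A : Type) (n : ℕ) (w : Word A) (ρ : Fin (n+1) → ℕ) : Ch0 A n :=
  ((fun i j => ρ i = ρ j), (fun i j => ρ i < ρ j), fun i => w (ρ i))

/-- The characteristic of a word with an assignment. -/
def chi (A : Type) : (k : ℕ) → (n : ℕ) → Word A → (Fin (n+1) → ℕ) → Ch A k n :=
  Nat.rec (motive := fun k => (n : ℕ) → Word A → (Fin (n+1) → ℕ) → Ch A k n)
    (chi0 A)
    (fun k ih n w ρ =>
      (chi0 A n w ρ, {c | ∃ m, Word.pos w m ∧ m < ρ 0 ∧ c = ih (n+1) w (Fin.snoc ρ m)}))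

theorem chi0_of_chi {A : Type} {k n : ℕ} {w w' : Word A} {ρ ρ' : Fin (n+1) → ℕ}
    (h : chi A k n w ρ = chi A k n w' ρ') : chi0 A n w ρ = chi0 A n w' ρ' := by
  cases k with
  | zero => exact h
  | succ k => exact congrArg Prod.fst h

theorem sat_iff_of_chi {A : Type} : {n : ℕ} → (φ : PFm A (n+1)) → {k : ℕ} → φ.depth ≤ k →
    {w w' : Word A} → {ρ ρ' : Fin (n+1) → ℕ} →
    chi A k n w ρ = chi A k n w' ρ' → (PFm.Sat w φ ρ ↔ PFm.Sat w' φ ρ')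
  | n, .eq i j, k, _, w, w', ρ, ρ', h => by
      have h0 := chi0_of_chi h
      simp only [chi0, Prod.mk.injEq] at h0
      exact iff_of_eq (congrFun (congrFun h0.1 i) j)
  | n, .lt i j, k, _, w, w', ρ, ρ', h => by
      have h0 := chi0_of_chi h
      simp only [chi0, Prod.mk.injEq] at h0
      exact iff_of_eq (congrFun (congrFun h0.2.1 i) j)
  | n, .letter a i, k, _, w, w', ρ, ρ', h => by
      have h0 := chi0_of_chi h
      simp only [chi0, Prod.mk.injEq] at h0
      have := congrFun h0.2.2 i
      simp only [PFm.Sat]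
      rw [this]
  | n, .and φ ψ, k, hd, w, w', ρ, ρ', h => by
      simp only [PFm.depth, max_le_iff] at hd
      simp only [PFm.Sat]
      rw [sat_iff_of_chi φ hd.1 h, sat_iff_of_chi ψ hd.2 h]
  | n, .not φ, k, hd, w, w', ρ, ρ', h => by
      simp only [PFm.depth] at hd
      simp only [PFm.Sat]
      rw [sat_iff_of_chi φ hd h]
  | n, .exlt φ, k, hd, w, w', ρ, ρ', h => by
      simp only [PFm.depth] at hd
      match k, hd with
      | (k'+1), hd =>
      have hd' : φ.depth ≤ k' := Nat.succ_le_succ_iff.mp hd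
      have hset : {c | ∃ m, Word.pos w m ∧ m < ρ 0 ∧ c = chi A k' (n+1) w (Fin.snoc ρ m)}
          = {c | ∃ m, Word.pos w' m ∧ m < ρ' 0 ∧ c = chi A k' (n+1) w' (Fin.snoc ρ' m)} :=
        congrArg Prod.snd h
      simp only [PFm.Sat]
      constructor
      · rintro ⟨m, hp, hlt, hs⟩
        have hmem : chi A k' (n+1) w (Fin.snoc ρ m) ∈
            {c | ∃ m, Word.pos w m ∧ m < ρ 0 ∧ c = chi A k' (n+1) w (Fin.snoc ρ m)} :=
          ⟨m, hp, hlt, rfl⟩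
        rw [hset] at hmem
        obtain ⟨m', hp', hlt', heq⟩ := hmem
        exact ⟨m', hp', hlt', (sat_iff_of_chi φ hd' heq.symm).mpr hs⟩
      · rintro ⟨m, hp, hlt, hs⟩
        have hmem : chi A k' (n+1) w' (Fin.snoc ρ' m) ∈
            {c | ∃ m, Word.pos w' m ∧ m < ρ' 0 ∧ c = chi A k' (n+1) w' (Fin.snoc ρ' m)} :=
          ⟨m, hp, hlt, rfl⟩
        rw [← hset] at hmem
        obtain ⟨m', hp', hlt', heq⟩ := hmem
        exact ⟨m', hp', hlt', (sat_iff_of_chi φ hd' heq).mp hs⟩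

/-- Top-level characteristic of a word. -/
def Theta (A : Type) (k : ℕ) (w : Word A) : Set (Ch A k 0) :=
  {c | ∃ m, Word.pos w m ∧ c = chi A k 0 w (fun _ => m)}

theorem psen_sat_iff {A : Type} (s : PSen A) {k : ℕ} (hd : s.depth ≤ k) {w w' : Word A}
    (h : Theta A k w = Theta A k w') : PSen.Sat w s ↔ PSen.Sat w' s := by
  induction s with
  | exB φ =>
      have hd' : φ.depth ≤ k := le_trans (Nat.le_succ _) hd
      simp only [PSen.Sat]
      constructor
      · rintro ⟨m, hp, hs⟩
        have hmem : chi A k 0 w (fun _ => m) ∈ Theta A k w := ⟨m, hp, rfl⟩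
        rw [h] at hmem
        obtain ⟨m', hp', heq⟩ := hmem
        exact ⟨m', hp', (sat_iff_of_chi φ hd' heq.symm).mpr hs⟩
      · rintro ⟨m, hp, hs⟩
        have hmem : chi A k 0 w' (fun _ => m) ∈ Theta A k w' := ⟨m, hp, rfl⟩
        rw [← h] at hmem
        obtain ⟨m', hp', heq⟩ := hmem
        exact ⟨m', hp', (sat_iff_of_chi φ hd' heq).mp hs⟩
  | and s t ihs iht =>
      simp only [PSen.depth, max_le_iff] at hd
      simp only [PSen.Sat]
      rw [ihs hd.1, iht hd.2]
  | not s ih =>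
      simp only [PSen.depth] at hd
      simp only [PSen.Sat]
      rw [ih hd]

theorem tp_eq_of_theta {A : Type} (k : ℕ) {w w' : Word A}
    (h : Theta A k w = Theta A k w') : tp k w = tp k w' :=
  Set.ext fun s => ⟨fun ⟨hd, hs⟩ => ⟨hd, (psen_sat_iff s hd h).1 hs⟩,
    fun ⟨hd, hs⟩ => ⟨hd, (psen_sat_iff s hd h).2 hs⟩⟩

theorem wtypes_finite (A : Type) [Finite A] (k : ℕ) : (WTypes A k).Finite := by
  classical
  have hsub : WTypes A k ⊆
      (fun S : Set (Ch A k 0) =>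
        if h : ∃ l : List A, Theta A k (Word.ofList l) = S then tp k (Word.ofList h.choose)
        else ∅) '' Set.univ := by
    rintro T ⟨l, rfl⟩
    refine ⟨Theta A k (Word.ofList l), trivial, ?_⟩
    have hex : ∃ l', Theta A k (Word.ofList l') = Theta A k (Word.ofList l) := ⟨l, rfl⟩
    show (if h : ∃ l', Theta A k (Word.ofList l') = Theta A k (Word.ofList l)
        then tp k (Word.ofList h.choose) else ∅) = tp k (Word.ofList l)
    rw [dif_pos hex]
    exact tp_eq_of_theta k (Exists.choose_spec hex)
  exact Set.Finite.subset (Set.Finite.image _ Set.finite_univ) hsub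

instance typFinite (A : Type) [Finite A] (k : ℕ) : Finite (Typ A k) :=
  (wtypes_finite A k).to_subtype

end PrefSynth
namespace PrefSynth

/-! ### Part II: the extra-token path construction -/

section TokenSim

variable {C : Type} {k : ℕ} {TS TE : Type}

attribute [local instance] Classical.propDecidable

/-- helper: getLast? of a nonempty list -/
theorem getLast?_eq_getLastD {α : Type} {l : List α} (hl : l ≠ []) (d : α) :
    l.getLast? = some (l.getLastD d) := by
  rw [List.getLastD_eq_getLast?]
  cases h : l.getLast? with
  | none => exact absurd (List.getLast?_eq_none_iff.mp h) hl
  | some a => rfl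

/-- The number of environment tokens whose condensed trajectory in history `h`
extends the path `q`. -/
noncomputable def Bcard (h : List (Conf C k TS TE)) (q : List (Typ C k)) : ℕ :=
  Nat.card {t : TE // q <+: condense (h.map (fun c => c (Sum.inr t)))}

/-- The condition for the extra token to advance. -/
def AdvCond (h : List (Conf C k TS TE)) (p : List (Typ C k)) : Prop :=
  ∃ τ' : Typ C k, h.length % 2 = 0 ∧ p.length ≤ Nat.card (Typ C k) ∧
    typLe (p.getLastD (initTyp C k)) τ' ∧ 1 ≤ Bcard h (p ++ [τ']) ∧
    k * (Nat.card (Typ C k) + 1) ^ (Nat.card (Typ C k) - p.length) ≤ Bcard h (p ++ [τ'])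

noncomputable def epathRev : List (Conf C k TS TE) → List (Typ C k)
  | [] => [initTyp C k]
  | c :: rest =>
      if hA : AdvCond ((c :: rest).reverse) (epathRev rest)
      then epathRev rest ++ [Classical.choose hA] else epathRev rest

/-- The path of the extra token along a history. -/
noncomputable def epath (h : List (Conf C k TS TE)) : List (Typ C k) :=
  epathRev h.reverse

/-- The position of the extra token after a history. -/
noncomputable def epos (h : List (Conf C k TS TE)) : Typ C k :=
  (epath h).getLastD (initTyp C k)

@[simp] theorem epath_nil : epath ([] : List (Conf C k TS TE)) = [initTyp C k] := rfl

theorem epath_concat (h : List (Conf C k TS TE)) (c : Conf C k TS TE) :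
    epath (h ++ [c]) = if hA : AdvCond (h ++ [c]) (epath h)
      then epath h ++ [Classical.choose hA] else epath h := by
  unfold epath
  rw [show (h ++ [c]).reverse = c :: h.reverse by simp]
  rw [epathRev]
  simp only [List.reverse_cons, List.reverse_reverse]

theorem epath_ne_nil (h : List (Conf C k TS TE)) : epath h ≠ [] := by
  unfold epath
  induction h.reverse with
  | nil => simp [epathRev]
  | cons c rest ih =>
      unfold epathRev
      split
      · simp
      · exact ih

/-- One-step description of `epath`. -/
theorem epath_step (h : List (Conf C k TS TE)) (c : Conf C k TS TE) :
    epath (h ++ [c]) = epath h ∨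
    ∃ τ' : Typ C k, (h ++ [c]).length % 2 = 0 ∧ (epath h).length ≤ Nat.card (Typ C k) ∧
      typLe (epos h) τ' ∧ 1 ≤ Bcard (h ++ [c]) (epath h ++ [τ']) ∧
      k * (Nat.card (Typ C k) + 1) ^ (Nat.card (Typ C k) - (epath h).length)
        ≤ Bcard (h ++ [c]) (epath h ++ [τ']) ∧
      epath (h ++ [c]) = epath h ++ [τ'] := by
  rw [epath_concat]
  split
  · next hA =>
      right
      obtain ⟨h1, h2, h3, h4, h5⟩ := Classical.choose_spec hA
      exact ⟨Classical.choose hA, h1, h2, h3, h4, h5, rfl⟩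
  · left; rfl

theorem nonempty_of_one_le_Bcard {h : List (Conf C k TS TE)} {q : List (Typ C k)}
    (hb : 1 ≤ Bcard h q) : ∃ t : TE, q <+: condense (h.map (fun c => c (Sum.inr t))) := by
  by_contra hc
  push_neg at hc
  have : IsEmpty {t : TE // q <+: condense (h.map (fun c => c (Sum.inr t)))} :=
    ⟨fun ⟨t, ht⟩ => hc t ht⟩
  rw [Bcard, Nat.card_of_isEmpty] at hb
  omega

/-- When advancing, the new type differs from the old position. -/
theorem advance_ne {h : List (Conf C k TS TE)} {q : List (Typ C k)} {τ' : Typ C k}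
    (hq : q ≠ []) (hb : 1 ≤ Bcard h (q ++ [τ'])) : τ' ≠ q.getLastD (initTyp C k) := by
  obtain ⟨t, ht⟩ := nonempty_of_one_le_Bcard hb
  have hchain : List.IsChain (· ≠ ·) (q ++ [τ']) :=
    (condense_chain'_ne _).prefix ht
  rw [List.isChain_append] at hchain
  have := hchain.2.2 _ ((getLast?_eq_getLastD hq (initTyp C k))) τ' rfl
  exact fun he => this (by rw [he])

/-- Chain property of `epath` under `typLe`. -/
theorem epath_chain_le (h : List (Conf C k TS TE)) : List.IsChain typLe (epath h) := by
  induction h using List.reverseRecOn with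
  | nil => simp
  | append_singleton h c ih =>
      rcases epath_step h c with heq | ⟨τ', _, _, h3, _, _, heq⟩
      · rw [heq]; exact ih
      · rw [heq, List.isChain_append]
        refine ⟨ih, List.isChain_singleton _, ?_⟩
        intro a ha y hy
        simp only [List.head?_cons, Option.mem_def, Option.some.injEq] at hy
        subst hy
        rw [getLast?_eq_getLastD (epath_ne_nil h) (initTyp C k)] at ha
        cases ha
        exact h3
      
/-- Chain property of `epath` under `≠`. -/
theorem epath_chain_ne (h : List (Conf C k TS TE)) : List.IsChain (· ≠ ·) (epath h) := by
  induction h using List.reverseRecOn with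
  | nil => simp
  | append_singleton h c ih =>
      rcases epath_step h c with heq | ⟨τ', _, _, _, h4, _, heq⟩
      · rw [heq]; exact ih
      · rw [heq, List.isChain_append]
        refine ⟨ih, List.isChain_singleton _, ?_⟩
        intro a ha y hy
        simp only [List.head?_cons, Option.mem_def, Option.some.injEq] at hy
        subst hy
        rw [getLast?_eq_getLastD (epath_ne_nil h) (initTyp C k)] at ha
        cases ha
        exact (advance_ne (epath_ne_nil h) h4).symm

theorem epath_head (h : List (Conf C k TS TE)) : (epath h).head? = some (initTyp C k) := by
  induction h using List.reverseRecOn with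
  | nil => simp
  | append_singleton h c ih =>
      rcases epath_step h c with heq | ⟨τ', _, _, _, _, _, heq⟩
      · rw [heq]; exact ih
      · rcases hE : epath h with _ | ⟨a, l⟩
        · exact absurd hE (epath_ne_nil h)
        · rw [hE] at ih heq
          rw [heq]
          simpa using ih
      
theorem Bcard_mono_concat (h : List (Conf C k TS TE)) (c : Conf C k TS TE)
    (q : List (Typ C k)) [Finite TE] : Bcard h q ≤ Bcard (h ++ [c]) q := by
  apply Nat.card_le_card_of_injective
    (fun x => (⟨x.1, by
      have hx := x.2
      have hpre : condense (h.map (fun cc => cc (Sum.inr x.1))) <+: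
          condense ((h ++ [c]).map (fun cc => cc (Sum.inr x.1))) := by
        rw [List.map_append]
        exact condense_prefix_concat _ _
      exact hx.trans hpre⟩ :
      {t : TE // q <+: condense ((h ++ [c]).map (fun cc => cc (Sum.inr t)))}))
  intro x y hxy
  cases x; cases y
  simpa using hxy

end TokenSim

end PrefSynth
namespace PrefSynth

/-! ### Part III: a winning token strategy forbids infinite walks -/

section Walk

variable {C : Type} {k : ℕ} {TS TE' : Type}

attribute [local instance] Classical.propDecidable

noncomputable def walkNext (σ' : TokStrat C k TS TE') (e0 : TE') (w : ℕ → Typ C k)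
    (h : List (Conf C k TS TE')) : Conf C k TS TE' :=
  if h.length = 0 then (fun _ => initTyp C k)
  else
    if Even (h.length - 1) then
      (fun x => if x = Sum.inr e0 then w ((h.length - 1) / 2 + 1)
        else h.getLastD (fun _ => initTyp C k) x)
    else
      (fun x => match x with
        | .inl t => σ' h t
        | .inr e => h.getLastD (fun _ => initTyp C k) (.inr e))

noncomputable def walkHist (σ' : TokStrat C k TS TE') (e0 : TE') (w : ℕ → Typ C k) :
    ℕ → List (Conf C k TS TE')
  | 0 => []
  | n+1 => walkHist σ' e0 w n ++ [walkNext σ' e0 w (walkHist σ' e0 w n)]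

noncomputable def confW (σ' : TokStrat C k TS TE') (e0 : TE') (w : ℕ → Typ C k)
    (n : ℕ) : Conf C k TS TE' :=
  walkNext σ' e0 w (walkHist σ' e0 w n)

variable (σ' : TokStrat C k TS TE') (e0 : TE') (w : ℕ → Typ C k)

theorem walkHist_length (n : ℕ) : (walkHist σ' e0 w n).length = n := by
  induction n with
  | zero => rfl
  | succ n ih => simp [walkHist, ih]

theorem walkHist_succ (n : ℕ) :
    walkHist σ' e0 w (n+1) = walkHist σ' e0 w n ++ [confW σ' e0 w n] := rfl

theorem walkHist_getLastD (n : ℕ) (d : Conf C k TS TE') :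
    (walkHist σ' e0 w (n+1)).getLastD d = confW σ' e0 w n := by
  rw [walkHist_succ]
  induction (walkHist σ' e0 w n) with
  | nil => rfl
  | cons a l ih => cases l with
    | nil => rfl
    | cons b l' => exact ih

theorem confW_zero : confW σ' e0 w 0 = fun _ => initTyp C k := rfl

theorem confW_succ_even {n : ℕ} (hn : Even n) :
    confW σ' e0 w (n+1) = fun x => if x = Sum.inr e0 then w (n / 2 + 1)
      else confW σ' e0 w n x := by
  show walkNext σ' e0 w (walkHist σ' e0 w (n+1)) = _
  unfold walkNext
  rw [if_neg (by rw [walkHist_length]; omega)]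
  rw [walkHist_length]
  simp only [Nat.add_sub_cancel]
  rw [if_pos hn]
  funext x
  rw [walkHist_getLastD]

theorem confW_succ_odd {n : ℕ} (hn : ¬ Even n) :
    confW σ' e0 w (n+1) = fun x => match x with
      | .inl t => σ' (walkHist σ' e0 w (n+1)) t
      | .inr e => confW σ' e0 w n (.inr e) := by
  show walkNext σ' e0 w (walkHist σ' e0 w (n+1)) = _
  unfold walkNext
  rw [if_neg (by rw [walkHist_length]; omega)]
  rw [walkHist_length]
  simp only [Nat.add_sub_cancel]
  rw [if_neg hn]
  funext x
  cases x with
  | inl t => rfl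
  | inr e => rw [walkHist_getLastD]

theorem walkHist_eq_ofFn (n : ℕ) :
    walkHist σ' e0 w n = List.ofFn (fun i : Fin n => confW σ' e0 w i) := by
  induction n with
  | zero => rfl
  | succ n ih =>
      rw [List.ofFn_succ', walkHist_succ, ih, List.concat_eq_append]
      congr 1

theorem confW_e0 (hw0 : w 0 = initTyp C k) (n : ℕ) :
    confW σ' e0 w n (Sum.inr e0) = w ((n + 1) / 2) := by
  induction n with
  | zero => rw [confW_zero]; simp [hw0.symm]
  | succ n ih =>
      by_cases hn : Even n
      · obtain ⟨m, rfl⟩ := hn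
        rw [confW_succ_even σ' e0 w ⟨m, rfl⟩]
        simp only [if_pos rfl]
        have harg : (m + m) / 2 + 1 = (m + m + 1 + 1) / 2 := by omega
        rw [harg]
        simp
      · have : ∃ m, n = 2*m+1 := by
          rcases Nat.even_or_odd n with h | h
          · exact absurd h hn
          · obtain ⟨m, hm⟩ := h; exact ⟨m, hm⟩
        obtain ⟨m, rfl⟩ := this
        rw [confW_succ_odd σ' e0 w hn]
        simp only []
        rw [ih]
        have harg : (2*m+1+1)/2 = (2*m+1+1+1)/2 := by omega
        rw [harg]

theorem isPlay_confW (hleg : StratLegal σ') (hw0 : w 0 = initTyp C k)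
    (hstep : ∀ s, typLe (w s) (w (s+1))) : IsPlay (confW σ' e0 w) := by
  refine ⟨fun t => rfl, ?_, ?_, ?_⟩
  · intro n t
    by_cases hn : Even n
    · rw [confW_succ_even σ' e0 w hn]
      by_cases ht : t = Sum.inr e0
      · subst ht
        simp only [if_pos rfl]
        rw [confW_e0 σ' e0 w hw0]
        have h2 : (n+1)/2 = n/2 := by obtain ⟨m, rfl⟩ := hn; omega
        rw [h2]
        exact hstep _
      · simp only [if_neg ht]
        exact typLe_refl _
    · rw [confW_succ_odd σ' e0 w hn]
      cases t with
      | inl t =>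
          have hne : walkHist σ' e0 w (n+1) ≠ [] := by
            intro hh
            have := walkHist_length σ' e0 w (n+1)
            rw [hh] at this
            simp at this
          have := hleg (walkHist σ' e0 w (n+1)) hne t
          have hgl : (walkHist σ' e0 w (n+1)).getLast hne = confW σ' e0 w n := by
            have h1 := getLast?_eq_getLastD hne (fun _ => initTyp C k)
            rw [List.getLast?_eq_getLast hne] at h1
            have h2 := walkHist_getLastD σ' e0 w n (fun _ => initTyp C k)
            rw [← h2]
            exact Option.some_injective _ h1
          rw [hgl] at this
          exact this
      | inr e => exact typLe_refl _
  · intro n hn t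
    rw [confW_succ_even σ' e0 w hn]
    simp
  · intro n hn t
    rw [confW_succ_odd σ' e0 w hn]

theorem compatible_confW : CompatibleTok σ' (confW σ' e0 w) := by
  intro n hn t
  rw [confW_succ_odd σ' e0 w hn]
  simp only []
  congr 1
  exact walkHist_eq_ofFn σ' e0 w (n+1)

end Walk

section NoCycle

variable {A B : Type} {k : ℕ} {TS TE' : Type}

theorem cycle_no_win (σ' : TokStrat (A ⊕ B) k TS TE') (φ : PDW A B 0 0 0)
    (hleg : StratLegal σ') (hwin : TokWinning φ σ') (e0 : TE')
    (w : ℕ → Typ (A ⊕ B) k) (hw0 : w 0 = initTyp (A ⊕ B) k)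
    (hstep : ∀ s, typLe (w s) (w (s+1))) (hne : ∀ s, w s ≠ w (s+1)) : False := by
  obtain ⟨N, hstab, -⟩ := hwin (confW σ' e0 w) (isPlay_confW σ' e0 w hleg hw0 hstep)
    (compatible_confW σ' e0 w)
  have h1 := hstab (2*N) (by omega)
  have h2 := hstab (2*N+2) (by omega)
  have e1 := confW_e0 σ' e0 w hw0 (2*N)
  have e2 := confW_e0 σ' e0 w hw0 (2*N+2)
  rw [h1] at e1
  rw [h2] at e2
  have : w ((2*N+1)/2) = w ((2*N+2+1)/2) := by rw [← e1, ← e2]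
  have hNN : (2*N+1)/2 = N := by omega
  have hNN2 : (2*N+2+1)/2 = N+1 := by omega
  rw [hNN, hNN2] at this
  exact hne N this

/-- A winning strategy rules out `typLe`-paths from `initTyp` longer than the
number of types. -/
theorem no_win_of_long_path [Finite (Typ (A ⊕ B) k)] (σ' : TokStrat (A ⊕ B) k TS TE')
    (φ : PDW A B 0 0 0) (hleg : StratLegal σ') (hwin : TokWinning φ σ') (e0 : TE')
    (p : List (Typ (A ⊕ B) k)) (hchain : List.IsChain typLe p)
    (hnechain : List.IsChain (· ≠ ·) p) (hhead : p.head? = some (initTyp (A ⊕ B) k))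
    (hlen : Nat.card (Typ (A ⊕ B) k) + 1 ≤ p.length) : False := by
  classical
  haveI := Fintype.ofFinite (Typ (A ⊕ B) k)
  have hpne : p ≠ [] := by intro hp; rw [hp] at hhead; simp at hhead
  -- find a repetition
  have hcard : Fintype.card (Typ (A ⊕ B) k) < Fintype.card (Fin p.length) := by
    rw [Fintype.card_fin]
    rw [Nat.card_eq_fintype_card] at hlen
    omega
  obtain ⟨i0, j0, hij0, heq0⟩ := Fintype.exists_ne_map_eq_of_card_lt
    (fun i : Fin p.length => p[(i : ℕ)]) hcard
  -- wlog i < j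
  obtain ⟨i, j, hilen, hjlen, hij, hrep⟩ : ∃ i j : ℕ, ∃ (hi : i < p.length)
      (hj : j < p.length), i < j ∧ p[i] = p[j] := by
    rcases lt_or_gt_of_ne (fun h => hij0 (Fin.ext h) : (i0 : ℕ) ≠ (j0 : ℕ)) with h | h
    · exact ⟨i0, j0, i0.isLt, j0.isLt, h, heq0⟩
    · exact ⟨j0, i0, j0.isLt, i0.isLt, h, heq0.symm⟩
  -- the cyclic index function
  let g : ℕ → ℕ := fun s => Nat.rec 0 (fun _ gs => if gs + 1 < j then gs + 1 else i) s
  have hg0 : g 0 = 0 := rfl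
  have hgsucc : ∀ s, g (s+1) = if g s + 1 < j then g s + 1 else i := fun s => rfl
  have hglt : ∀ s, g s < j := by
    intro s
    induction s with
    | zero => rw [hg0]; omega
    | succ s ih =>
        rw [hgsucc]
        split
        · assumption
        · exact hij
  have hglen : ∀ s, g s < p.length := fun s => lt_trans (hglt s) hjlen
  let wk : ℕ → Typ (A ⊕ B) k := fun s => p[g s]'(hglen s)
  have hchain' := List.isChain_iff_getElem.mp hchain
  have hnechain' := List.isChain_iff_getElem.mp hnechain
  have hwstep : ∀ s, typLe (wk s) (wk (s+1)) ∧ wk s ≠ wk (s+1) := by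
    intro s
    have hsucc := hgsucc s
    by_cases hc : g s + 1 < j
    · rw [if_pos hc] at hsucc
      have h1 : wk (s+1) = p.get ⟨g s + 1, by omega⟩ := congrArg p.get (Fin.ext hsucc)
      have h0 : wk s = p.get ⟨g s, by omega⟩ := rfl
      rw [h0, h1]
      exact ⟨hchain' (g s) (by omega), hnechain' (g s) (by omega)⟩
    · rw [if_neg hc] at hsucc
      have hgs : g s = j - 1 := by have := hglt s; omega
      have h1 : wk (s+1) = p.get ⟨i, by omega⟩ := congrArg p.get (Fin.ext hsucc)
      have hij' : p.get ⟨i, by omega⟩ = p.get ⟨j, hjlen⟩ := hrep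
      have h0 : wk s = p.get ⟨j - 1, by omega⟩ := congrArg p.get (Fin.ext hgs)
      have hj1 : j - 1 + 1 = j := by omega
      have hjj : p.get ⟨j - 1 + 1, by omega⟩ = p.get ⟨j, hjlen⟩ := congrArg p.get (Fin.ext hj1)
      rw [h0, h1, hij']
      refine ⟨?_, ?_⟩
      · rw [← hjj]; exact hchain' (j-1) (by omega)
      · rw [← hjj]; exact hnechain' (j-1) (by omega)
  have hw0 : wk 0 = initTyp (A ⊕ B) k := by
    rw [List.head?_eq_head hpne] at hhead
    simp only [Option.some.injEq] at hhead
    show p[(0:ℕ)]'(hglen 0) = _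
    rw [List.getElem_zero, hhead]
  exact cycle_no_win σ' φ hleg hwin e0 wk hw0 (fun s => (hwstep s).1) (fun s => (hwstep s).2)

end NoCycle

end PrefSynth
namespace PrefSynth

/-! ### Part IV: lifting histories with an extra environment token -/

section Lift

variable {C : Type} {k : ℕ} {TS TE : Type}

/-- The history of a play up to (excluding) time `n`. -/
noncomputable def histf (conf : ℕ → Conf C k TS TE) (n : ℕ) : List (Conf C k TS TE) :=
  List.ofFn (fun i : Fin n => conf i)

@[simp] theorem histf_length (conf : ℕ → Conf C k TS TE) (n : ℕ) :
    (histf conf n).length = n := by simp [histf]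

theorem histf_succ (conf : ℕ → Conf C k TS TE) (n : ℕ) :
    histf conf (n+1) = histf conf n ++ [conf n] := by
  unfold histf
  rw [List.ofFn_succ', List.concat_eq_append]
  congr 1

theorem histf_getElem (conf : ℕ → Conf C k TS TE) (n : ℕ) (i : ℕ) (hi : i < n) :
    (histf conf n)[i]'(by simp [hi]) = conf i := by
  simp [histf]

theorem histf_take (conf : ℕ → Conf C k TS TE) {m i : ℕ} (him : i ≤ m) :
    (histf conf m).take i = histf conf i := by
  apply List.ext_getElem
  · simp [him]
  · intro j h1 h2
    rw [List.getElem_take]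
    simp [histf]

/-- Adding the extra token to a configuration. -/
def liftCfg (c : Conf C k TS TE) (τ : Typ C k) : Conf C k TS (Option TE) := fun x =>
  match x with
  | .inl s => c (.inl s)
  | .inr none => τ
  | .inr (some t) => c (.inr t)

/-- Lifting a history: the extra token follows `epos`. -/
noncomputable def lift (h : List (Conf C k TS TE)) : List (Conf C k TS (Option TE)) :=
  List.ofFn (fun i : Fin h.length => liftCfg (h.get i) (epos (h.take ((i : ℕ)+1))))

@[simp] theorem lift_length (h : List (Conf C k TS TE)) : (lift h).length = h.length := by
  simp [lift]

theorem lift_histf (conf : ℕ → Conf C k TS TE) (n : ℕ) :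
    lift (histf conf n) =
      List.ofFn (fun i : Fin n => liftCfg (conf i) (epos (histf conf ((i : ℕ)+1)))) := by
  unfold lift
  apply List.ext_getElem
  · simp
  · intro j h1 h2
    have hj : j < n := by simpa using h2
    simp only [List.getElem_ofFn, Fin.val_mk]
    rw [histf_take conf (by omega : j + 1 ≤ n)]
    simp [histf]

theorem lift_getLast (h : List (Conf C k TS TE)) (hne : h ≠ [])
    (hne' : lift h ≠ []) (t : TS) :
    (lift h).getLast hne' (Sum.inl t) = h.getLast hne (Sum.inl t) := by
  have hlen0 : 0 < h.length := List.length_pos_iff.mpr hne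
  have hidx : h.length - 1 < (lift h).length := by rw [lift_length]; omega
  have e1 : (lift h).getLast hne' = (lift h)[h.length - 1]'hidx := by
    rw [List.getLast_eq_getElem]
    congr 1
    rw [lift_length]
  rw [e1]
  clear e1
  revert hidx
  unfold lift
  intro hidx
  rw [List.getElem_ofFn]
  rw [List.getLast_eq_getElem]
  rfl

/-- Parity: no advance at odd lengths. -/
theorem epath_odd (h : List (Conf C k TS TE)) (c : Conf C k TS TE)
    (hodd : (h ++ [c]).length % 2 ≠ 0) : epath (h ++ [c]) = epath h := by
  rcases epath_step h c with heq | ⟨τ', h1, _⟩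
  · exact heq
  · exact absurd h1 hodd

theorem epos_concat_le (h : List (Conf C k TS TE)) (c : Conf C k TS TE) :
    typLe (epos h) (epos (h ++ [c])) := by
  rcases epath_step h c with heq | ⟨τ', _, _, h3, _, _, heq⟩
  · unfold epos; rw [heq]; exact typLe_refl _
  · unfold epos
    rw [heq, List.getLastD_concat]
    exact h3

theorem epath_of_epos_eq (h : List (Conf C k TS TE)) (c : Conf C k TS TE)
    (he : epos (h ++ [c]) = epos h) : epath (h ++ [c]) = epath h := by
  rcases epath_step h c with heq | ⟨τ', _, _, _, h4, _, heq⟩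
  · exact heq
  · exfalso
    have : epos (h ++ [c]) = τ' := by unfold epos; rw [heq, List.getLastD_concat]
    rw [this] at he
    exact advance_ne (epath_ne_nil h) h4 he

theorem epath_singleton (c : Conf C k TS TE) : epath [c] = [initTyp C k] := by
  have : [c] = ([] : List (Conf C k TS TE)) ++ [c] := rfl
  rw [this, epath_odd]
  · rfl
  · simp

/-- `epos` starts at the initial type. -/
theorem epos_singleton (c : Conf C k TS TE) : epos [c] = initTyp C k := by
  unfold epos
  rw [epath_singleton]
  rfl

end Lift

end PrefSynth
namespace PrefSynth

section Count

variable {C : Type} {k : ℕ} {TS TE : Type}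

theorem nat_card_option (α : Type) [Finite α] : Nat.card (Option α) = Nat.card α + 1 := by
  rw [Nat.card_congr (Equiv.optionEquivSumPUnit.{0,0} α), Nat.card_sum]
  simp

theorem card_lift_ne [Finite TS] [Finite TE] (cfg : Conf C k TS TE) (τs τ : Typ C k)
    (hne : τ ≠ τs) :
    Nat.card {y : TS ⊕ Option TE // liftCfg cfg τs y = τ} =
      Nat.card {x : TS ⊕ TE // cfg x = τ} := by
  symm
  apply Nat.card_eq_of_bijective
    (f := fun x : {x : TS ⊕ TE // cfg x = τ} =>
      (⟨Sum.map id some x.1, by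
        obtain ⟨x, hx⟩ := x
        cases x with
        | inl s => exact hx
        | inr t => exact hx⟩ : {y : TS ⊕ Option TE // liftCfg cfg τs y = τ}))
  constructor
  · rintro ⟨x, hx⟩ ⟨y, hy⟩ hxy
    simp only [Subtype.mk.injEq] at hxy
    exact Subtype.ext (Sum.map_injective.mpr
      ⟨Function.injective_id, Option.some_injective _⟩ hxy)
  · rintro ⟨y, hy⟩
    cases y with
    | inl s => exact ⟨⟨Sum.inl s, hy⟩, rfl⟩
    | inr o =>
        cases o with
        | none => exact absurd hy.symm hne
        | some t => exact ⟨⟨Sum.inr t, hy⟩, rfl⟩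

theorem card_lift_eq [Finite TS] [Finite TE] (cfg : Conf C k TS TE) (τs : Typ C k) :
    Nat.card {y : TS ⊕ Option TE // liftCfg cfg τs y = τs} =
      Nat.card {x : TS ⊕ TE // cfg x = τs} + 1 := by
  have e : {y : TS ⊕ Option TE // liftCfg cfg τs y = τs} ≃
      Option {x : TS ⊕ TE // cfg x = τs} :=
    { toFun := fun y =>
        match y with
        | ⟨.inl s, hy⟩ => some ⟨Sum.inl s, hy⟩
        | ⟨.inr (some t), hy⟩ => some ⟨Sum.inr t, hy⟩
        | ⟨.inr none, _⟩ => none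
      invFun := fun o =>
        match o with
        | none => ⟨Sum.inr none, rfl⟩
        | some ⟨.inl s, hx⟩ => ⟨Sum.inl s, hx⟩
        | some ⟨.inr t, hx⟩ => ⟨Sum.inr (some t), hx⟩
      left_inv := by
        rintro ⟨(s | (_ | t)), hy⟩ <;> rfl
      right_inv := by
        rintro (_ | ⟨(s | t), hx⟩) <;> rfl }
  rw [Nat.card_congr e, nat_card_option]

/-- Transfer of `CfgMatches` from the lifted configuration, provided the extra
token's type carries at least `k` tokens in the real configuration. -/
theorem cfgMatches_transfer [Finite TS] [Finite TE] {cfg : Conf C k TS TE}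
    {τs : Typ C k} {c : Typ C k → ℕ}
    (hM : CfgMatches c (liftCfg cfg τs : Conf C k TS (Option TE)))
    (hcrowd : k ≤ Nat.card {x : TS ⊕ TE // cfg x = τs}) :
    CfgMatches c cfg := by
  intro τ
  by_cases hτ : τ = τs
  · subst hτ
    have h1 := (hM τ).1
    have h2 := (hM τ).2
    rw [card_lift_eq] at h1 h2
    constructor
    · intro hc
      exfalso
      have := h1 hc
      omega
    · intro hc
      exact hcrowd
  · have h1 := (hM τ).1
    have h2 := (hM τ).2
    rw [card_lift_ne cfg τs τ hτ] at h1 h2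
    exact ⟨h1, h2⟩

end Count

end PrefSynth
namespace PrefSynth

/-- Environment cutoff: for every `k` there exists `f_E` such
that for every `nS`, every `nE ≥ f_E` and every prefFO^dw sentence `φ` of
quantifier depth `k`, if `(nS, nE + 1)` is winning for System in the token game
for `φ`, then so is `(nS, nE)`. -/
theorem environment_cutoff {A B : Type} [Finite A] [Finite B] (k : ℕ) :
    ∃ fE : ℕ, ∀ nS nE : ℕ, fE ≤ nE → ∀ φ : PDW A B 0 0 0, PDW.depth φ = k →
      SystemWinsTok A B k φ nS (nE + 1) → SystemWinsTok A B k φ nS nE := by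
  classical
  haveI : Finite (Typ (A ⊕ B) k) := typFinite (A ⊕ B) k
  set M := Nat.card (Typ (A ⊕ B) k) with hMdef
  refine ⟨k * (M+1)^M, ?_⟩
  intro nS nE hnE φ hφ H
  intro TS TE finTS finTE hTS hTE
  haveI := finTS; haveI := finTE
  obtain ⟨σ', hleg', hwin'⟩ := H TS (Option TE) inferInstance inferInstance hTS
    (by rw [nat_card_option, hTE])
  refine ⟨fun h t => σ' (lift h) t, ?_, ?_⟩
  · -- legality
    intro h hne t
    have hne' : lift h ≠ [] := by
      intro hh
      apply hne
      have hl := lift_length h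
      rw [hh] at hl
      exact List.length_eq_zero_iff.mp hl.symm
    have := hleg' (lift h) hne' t
    rwa [lift_getLast h hne hne' t] at this
  · -- winning
    intro conf hplay hcompat
    obtain ⟨hinit, hstep, hsysfr, henvfr⟩ := hplay
    set conf' : ℕ → Conf (A ⊕ B) k TS (Option TE) :=
      fun n => liftCfg (conf n) (epos (histf conf (n+1))) with hconf'def
    have hist1 : histf conf 1 = [conf 0] := by
      rw [histf_succ]
      simp [histf]
    -- the lifted play is a play
    have hplayL : IsPlay conf' := by
      refine ⟨?_, ?_, ?_, ?_⟩
      · intro x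
        cases x with
        | inl s => exact hinit (Sum.inl s)
        | inr o =>
            cases o with
            | none =>
                show epos (histf conf 1) = _
                rw [hist1, epos_singleton]
            | some t => exact hinit (Sum.inr t)
      · intro n x
        cases x with
        | inl s => exact hstep n (Sum.inl s)
        | inr o =>
            cases o with
            | none =>
                show typLe (epos (histf conf (n+1))) (epos (histf conf (n+2)))
                rw [histf_succ conf (n+1)]
                exact epos_concat_le _ _
            | some t => exact hstep n (Sum.inr t)
      · intro n hn t
        exact hsysfr n hn t
      · intro n hn x
        cases x with
        | none =>
            show epos (histf conf (n+2)) = epos (histf conf (n+1))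
            rw [histf_succ conf (n+1)]
            unfold epos
            rw [epath_odd]
            intro hpar
            simp only [List.length_append, histf_length, List.length_cons,
              List.length_nil] at hpar
            rcases Nat.even_or_odd n with he | ho
            · exact hn he
            · obtain ⟨m, hm⟩ := ho
              omega
        | some t => exact henvfr n hn t
    have hcompatL : CompatibleTok σ' conf' := by
      intro n hn t
      have h1 := hcompat n hn t
      show conf (n+1) (Sum.inl t) = _
      rw [h1]
      show σ' (lift (histf conf (n+1))) t = _
      rw [lift_histf]
    obtain ⟨N, hstabL, c, hAcc, hMatch⟩ := hwin' conf' hplayL hcompatL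
    -- stabilization of the real play
    have hstabR : ∀ n, N ≤ n → conf n = conf N := by
      intro n hn
      funext x
      cases x with
      | inl s => exact congrFun (hstabL n hn) (Sum.inl s)
      | inr t => exact congrFun (hstabL n hn) (Sum.inr (some t))
    refine ⟨N, hstabR, c, hAcc, ?_⟩
    -- it remains to show CfgMatches c (conf N)
    rcases Nat.eq_zero_or_pos k with hk0 | hk1
    · subst hk0
      intro τ
      exact ⟨fun hc => absurd hc (by omega), fun _ => Nat.zero_le _⟩
    set τs := epos (histf conf (N+1)) with hτsdef
    have hMatch' : CfgMatches c (liftCfg (conf N) τs : Conf (A ⊕ B) k TS (Option TE)) :=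
      hMatch
    apply cfgMatches_transfer hMatch'
    -- the crowd argument: k ≤ #{x | conf N x = τs}
    set p := epath (histf conf (N+1)) with hpdef
    have hτsp : τs = p.getLastD (initTyp (A ⊕ B) k) := rfl
    have hpne' : p ≠ [] := epath_ne_nil _
    -- the invariant
    have hInv : ∀ n, (epath (histf conf (n+1))).length ≤ M + 1 ∧
        k * (M+1)^(M + 1 - (epath (histf conf (n+1))).length)
          ≤ Bcard (histf conf (n+1)) (epath (histf conf (n+1))) := by
      intro n
      induction n with
      | zero =>
          rw [hist1, epath_singleton]
          constructor
          · simp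
          · have hall : ∀ t : TE, [initTyp (A ⊕ B) k] <+:
                condense (([conf 0]).map (fun cc => cc (Sum.inr t))) := by
              intro t
              simp only [List.map_cons, List.map_nil]
              rw [hinit (Sum.inr t), condense_singleton]
            have hBc : Bcard [conf 0] [initTyp (A ⊕ B) k] = Nat.card TE := by
              unfold Bcard
              exact Nat.card_congr (Equiv.subtypeUnivEquiv hall)
            rw [hBc, hTE]
            have hexp : M + 1 - ([initTyp (A ⊕ B) k] : List (Typ (A ⊕ B) k)).length = M := by
              simp
            rw [hexp]
            exact hnE
      | succ n ih =>
          rw [histf_succ conf (n+1)]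
          rcases epath_step (histf conf (n+1)) (conf (n+1)) with heq |
            ⟨τ', hpar, hlenle, hty, hb1, hbθ, heq⟩
          · rw [heq]
            exact ⟨ih.1, le_trans ih.2 (Bcard_mono_concat _ _ _)⟩
          · rw [heq]
            constructor
            · simp only [List.length_append, List.length_cons, List.length_nil]
              omega
            · have hexp : M + 1 - (epath (histf conf (n+1)) ++ [τ']).length
                  = M - (epath (histf conf (n+1))).length := by
                simp only [List.length_append, List.length_cons, List.length_nil]
                omega
              rw [hexp]
              exact hbθ
    -- stabilization of the extra-token path
    have hepos : ∀ n, N ≤ n → epos (histf conf (n+1)) = τs := by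
      intro n hn
      exact congrFun (hstabL n hn) (Sum.inr none)
    have hstabP0 : ∀ d, epath (histf conf (N+d+1)) = p := by
      intro d
      induction d with
      | zero => rfl
      | succ d ih =>
          have he : epos (histf conf (N+d+1) ++ [conf (N+d+1)]) =
              epos (histf conf (N+d+1)) := by
            rw [← histf_succ conf (N+d+1)]
            rw [hepos (N+d+1) (by omega), hepos (N+d) (by omega)]
          show epath (histf conf ((N+d+1)+1)) = p
          rw [histf_succ conf (N+d+1)]
          exact (epath_of_epos_eq _ _ he).trans ih
    have hstabP : ∀ n, N ≤ n → epath (histf conf (n+1)) = p := by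
      intro n hn
      have := hstabP0 (n - N)
      rw [show N + (n-N) + 1 = n+1 by omega] at this
      exact this
    -- case on the length of p
    rcases Nat.lt_or_ge p.length (M+1) with hshort | hlong
    case inr =>
      -- long path: contradiction with the winning strategy
      exfalso
      exact no_win_of_long_path σ' φ hleg' hwin' (none : Option TE) p
        (epath_chain_le _) (epath_chain_ne _) (epath_head _) (by omega)
    case inl =>
      haveI fTE := Fintype.ofFinite TE
      haveI fTyp := Fintype.ofFinite (Typ (A ⊕ B) k)
      have hp2 : epath (histf conf (2*N+1+1)) = p := hstabP (2*N+1) (by omega)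
      have hp1 : epath (histf conf (2*N+1)) = p := by
        have := hstabP (2*N) (by omega)
        exact this
      -- no advance is possible at time 2N+2
      have hnoadv : ¬ AdvCond (histf conf (2*N+1+1)) p := by
        intro hA
        have hcond : AdvCond (histf conf (2*N+1) ++ [conf (2*N+1)])
            (epath (histf conf (2*N+1))) := by
          rw [hp1, ← histf_succ conf (2*N+1)]
          exact hA
        have hgrow := epath_concat (histf conf (2*N+1)) (conf (2*N+1))
        rw [dif_pos hcond] at hgrow
        have hlen1 := congrArg List.length hgrow
        have hL1 : epath (histf conf (2*N+1) ++ [conf (2*N+1)]) = p := by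
          rw [← histf_succ conf (2*N+1)]
          exact hp2
        simp only [List.length_append, List.length_cons, List.length_nil] at hlen1
        have l1 := congrArg List.length hL1
        have l2 := congrArg List.length hp1
        omega
      set θ := k * (M+1)^(M - p.length) with hθdef
      have hpow : 0 < (M+1)^(M - p.length) := Nat.pow_pos (by omega)
      have hθpos : 0 < θ := Nat.mul_pos hk1 hpow
      have hθk : k ≤ θ := Nat.le_mul_of_pos_right k hpow
      have hBfin : ∀ q, Bcard (histf conf (2*N+1+1)) q =
          (Finset.univ.filter (fun t : TE =>
            q <+: condense ((histf conf (2*N+1+1)).map (fun cc => cc (Sum.inr t))))).card := by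
        intro q
        unfold Bcard
        rw [Nat.card_eq_fintype_card, Fintype.card_subtype]
      set ctraj := fun t : TE =>
        condense ((histf conf (2*N+1+1)).map (fun cc => cc (Sum.inr t))) with hctrajdef
      set BigF := Finset.univ.filter (fun t : TE => p <+: ctraj t) with hBigFdef
      set ExactF := Finset.univ.filter (fun t : TE => ctraj t = p) with hExactFdef
      set BuckF := fun τ'' => Finset.univ.filter
        (fun t : TE => p ++ [τ''] <+: ctraj t) with hBuckFdef
      -- lower bound on BigF
      have hInvL := (hInv (2*N+1)).2
      rw [hp2] at hInvL
      have hBigCard : (M+1) * θ ≤ BigF.card := by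
        have hexp : M + 1 - p.length = (M - p.length) + 1 := by omega
        rw [hexp, pow_succ] at hInvL
        have he2 : k * ((M+1)^(M - p.length) * (M+1)) = (M+1) * θ := by
          rw [hθdef]; ring
        rw [he2] at hInvL
        rw [hBfin p] at hInvL
        exact hInvL
      -- trajectories are typLe-chains
      have htrajchain : ∀ t : TE, List.IsChain typLe (ctraj t) := by
        intro t
        apply condense_chain'
        unfold histf
        rw [List.map_ofFn]
        rw [List.isChain_iff_getElem]
        intro i hi
        simp only [List.getElem_ofFn, Function.comp_apply]
        exact hstep i (Sum.inr t)
      -- each bucket is small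
      have hBuckCard : ∀ τ'', (BuckF τ'').card ≤ θ - 1 := by
        intro τ''
        rcases Nat.eq_zero_or_pos (BuckF τ'').card with h0 | hpos
        · omega
        · obtain ⟨t, ht⟩ := Finset.card_pos.mp hpos
          have hpre : p ++ [τ''] <+: ctraj t := (Finset.mem_filter.mp ht).2
          have htyp : typLe τs τ'' := by
            have hc := (htrajchain t).prefix hpre
            rw [List.isChain_append] at hc
            refine hc.2.2 τs ?_ τ'' rfl
            rw [getLast?_eq_getLastD hpne' (initTyp (A ⊕ B) k), ← hτsp]
            rfl
          have hEq : Bcard (histf conf (2*N+1+1)) (p ++ [τ'']) = (BuckF τ'').card :=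
            hBfin (p ++ [τ''])
          have hb1 : 1 ≤ Bcard (histf conf (2*N+1+1)) (p ++ [τ'']) := by omega
          by_contra hcon
          push_neg at hcon
          apply hnoadv
          refine ⟨τ'', ?_, ?_, ?_, hb1, ?_⟩
          · rw [histf_length]
            omega
          · show p.length ≤ M
            omega
          · rw [← hτsp]
            exact htyp
          · show θ ≤ Bcard (histf conf (2*N+1+1)) (p ++ [τ''])
            omega
      -- BigF is covered by ExactF and the buckets
      have hsubset : BigF ⊆ ExactF ∪ Finset.univ.biUnion BuckF := by
        intro t ht
        have hpre : p <+: ctraj t := (Finset.mem_filter.mp ht).2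
        rcases prefix_cases hpre with heq | ⟨x, hx⟩
        · exact Finset.mem_union_left _ (Finset.mem_filter.mpr ⟨Finset.mem_univ _, heq⟩)
        · exact Finset.mem_union_right _ (Finset.mem_biUnion.mpr
            ⟨x, Finset.mem_univ _, Finset.mem_filter.mpr ⟨Finset.mem_univ _, hx⟩⟩)
      have hsum : (Finset.univ.biUnion BuckF).card ≤ M * (θ - 1) := by
        calc (Finset.univ.biUnion BuckF).card
            ≤ ∑ τ'' ∈ Finset.univ, (BuckF τ'').card := Finset.card_biUnion_le
          _ ≤ Finset.univ.card • (θ - 1) :=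
              Finset.sum_le_card_nsmul _ _ _ (fun x _ => hBuckCard x)
          _ = M * (θ - 1) := by
              rw [smul_eq_mul, Finset.card_univ, ← Nat.card_eq_fintype_card]
      -- conclude on ExactF
      have hEcard : k ≤ ExactF.card := by
        have h1 : BigF.card ≤ ExactF.card + M*(θ-1) := by
          have ha := Finset.card_le_card hsubset
          have hb := Finset.card_union_le ExactF (Finset.univ.biUnion BuckF)
          omega
        have h2 : (M+1)*θ = M*θ + θ := by ring
        have h3 : M*(θ-1) + M = M*θ := by
          have ht : θ - 1 + 1 = θ := by omega
          calc M*(θ-1) + M = M*(θ-1+1) := (Nat.mul_succ M (θ-1)).symm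
            _ = M*θ := by rw [ht]
        have h5 : M*θ + θ ≤ ExactF.card + M*(θ-1) := by
          calc M*θ + θ = (M+1)*θ := h2.symm
            _ ≤ BigF.card := hBigCard
            _ ≤ ExactF.card + M*(θ-1) := h1
        linarith [h3, h5, hθk]
      -- Exact tokens sit at τs in conf N
      have hexactpos : ∀ t ∈ ExactF, conf N (Sum.inr t) = τs := by
        intro t ht
        have hexq : ctraj t = p := (Finset.mem_filter.mp ht).2
        have hlast : (ctraj t).getLast? = some (conf (2*N+1) (Sum.inr t)) := by
          show (condense ((histf conf (2*N+1+1)).map (fun cc => cc (Sum.inr t)))).getLast?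
            = _
          rw [condense_getLast?, histf_succ conf (2*N+1), List.map_append]
          simp
        rw [hexq] at hlast
        have hlast2 : p.getLast? = some τs := by
          rw [getLast?_eq_getLastD hpne' (initTyp (A ⊕ B) k), ← hτsp]
        rw [hlast2] at hlast
        have heq := Option.some_injective _ hlast
        have hc := congrFun (hstabR (2*N+1) (by omega)) (Sum.inr t)
        rw [heq]
        exact hc.symm
      calc k ≤ ExactF.card := hEcard
        _ ≤ (Finset.univ.filter (fun t : TE => conf N (Sum.inr t) = τs)).card :=
            Finset.card_le_card (fun t ht =>
              Finset.mem_filter.mpr ⟨Finset.mem_univ _, hexactpos t ht⟩)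
        _ = Nat.card {t : TE // conf N (Sum.inr t) = τs} := by
            rw [Nat.card_eq_fintype_card, Fintype.card_subtype]
        _ ≤ Nat.card {x : TS ⊕ TE // conf N x = τs} := by
            apply Nat.card_le_card_of_injective
              (fun y : {t : TE // conf N (Sum.inr t) = τs} =>
                (⟨Sum.inr y.1, y.2⟩ : {x : TS ⊕ TE // conf N x = τs}))
            rintro ⟨a, ha⟩ ⟨b, hb⟩ hab
            simp only [Subtype.mk.injEq, Sum.inr.injEq] at hab
            exact Subtype.ext hab


end PrefSynth
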